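/- The scalar system x'(t) = -x(t)/(t+1) on Ω = [-1,1] is not SOST (contraction after small overshoot and transient): there exist τ, ε > 0 such that for every ℓ > 0 there are t₂ ≥ t₁ ≥ 0 and a, b ∈ Ω with |x(t₂+τ, t₁, a) - x(t₂+τ, t₁, b)| > (1+ε) exp(-(t₂-t₁)ℓ) |a-b|. -/

import Mathlib

open Real Set

/-- Solution of `x' = -x/(t+1)` with `x(t₁) = a`. -/
noncomputable def sol (t t₁ a : ℝ) : ℝ := a * (t₁ + 1) / (t + 1)

/-- The system `x' = -x/(t+1)` on `Ω = [-1,1]` is not SOST: there exist `τ, ε > 0`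
such that for every `ℓ > 0` one can find `t₂ ≥ t₁ ≥ 0` and `a, b ∈ Ω` with
`|x(t₂+τ,t₁,a) - x(t₂+τ,t₁,b)| > (1+ε) exp(-(t₂-t₁)ℓ) |a-b|`. -/
theorem stmt3 :
    ∃ τ : ℝ, 0 < τ ∧ ∃ ε : ℝ, 0 < ε ∧
      ∀ ℓ : ℝ, 0 < ℓ →
        ∃ t₁ t₂ a b : ℝ, 0 ≤ t₁ ∧ t₁ ≤ t₂ ∧ a ∈ Icc (-1 : ℝ) 1 ∧ b ∈ Icc (-1 : ℝ) 1 ∧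
          (1 + ε) * Real.exp (-(t₂ - t₁) * ℓ) * |a - b| <
            |sol (t₂ + τ) t₁ a - sol (t₂ + τ) t₁ b| := by
  refine ⟨1, one_pos, 1, one_pos, fun ℓ hℓ => ?_⟩
  have hℓ2 : 0 < ℓ ^ 2 := by positivity
  obtain ⟨T, hT⟩ : ∃ T : ℝ, T = 4 + 16 / ℓ ^ 2 := ⟨_, rfl⟩
  have hT4 : 4 ≤ T := by
    rw [hT]; have : 0 ≤ 16 / ℓ ^ 2 := by positivity
    linarith
  have hTpos : 0 < T := by linarith
  have hT0 : 0 ≤ T := hTpos.le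
  refine ⟨0, T, 1, 0, le_refl 0, hT0, ⟨by norm_num, le_refl 1⟩, ⟨by norm_num, by norm_num⟩, ?_⟩
  -- key: T * ℓ² = 4ℓ² + 16
  have hTl2 : T * ℓ ^ 2 = 4 * ℓ ^ 2 + 16 := by
    rw [hT]; field_simp
  have hTl2' : 16 < T * ℓ ^ 2 := by rw [hTl2]; linarith
  have hsq : 16 * T < T * (T * ℓ ^ 2) := by
    have := mul_lt_mul_of_pos_left hTl2' hTpos
    linarith
  have hkey : 2 * (T + 2) < Real.exp (T * ℓ) := by
    have hx : 0 < T * ℓ := mul_pos hTpos hℓ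
    have h1 : 1 + T * ℓ / 2 ≤ Real.exp (T * ℓ / 2) := by
      linarith [Real.add_one_le_exp (T * ℓ / 2)]
    have hq : (0:ℝ) ≤ 1 + T * ℓ / 2 := by linarith
    have h3 : (1 + T * ℓ / 2) * (1 + T * ℓ / 2) ≤ Real.exp (T * ℓ) := by
      have := mul_le_mul h1 h1 hq (le_trans hq h1)
      rwa [← Real.exp_add, show T * ℓ / 2 + T * ℓ / 2 = T * ℓ by ring] at this
    nlinarith [h3, hsq, hx, hT4]
  simp only [sol]
  norm_num
  rw [abs_of_pos (show (0:ℝ) < T + 1 + 1 by positivity), Real.exp_neg]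
  have hp : 0 < Real.exp (T * ℓ) := Real.exp_pos _
  rw [show (2:ℝ) * (Real.exp (T * ℓ))⁻¹ = 2 / Real.exp (T * ℓ) by ring,
      inv_eq_one_div, div_lt_div_iff₀ hp (by linarith)]
  nlinarith [hkey, hp]
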